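/- Let n ≥ 1 and let a₁,…,aₙ be real numbers with a₁ + ⋯ + aₙ ≥ 0. Then the number of subsets Y ⊆ {1,…,n} with ∑_{i∈Y} aᵢ ≥ 0 (counting the empty set, whose sum is 0) is at least 2^(n-1). -/
import Mathlib


/-- Manickam–Miklós lower bound: if `a₁ + ⋯ + aₙ ≥ 0` then at least `2^(n-1)` of the
subsets `Y ⊆ {1,…,n}` have non-negative partial sum `∑_{i ∈ Y} aᵢ`. -/
theorem stmt0 (n : ℕ) (hn : 1 ≤ n) (a : Fin n → ℝ) (h : 0 ≤ ∑ i, a i) :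
    2 ^ (n - 1) ≤ Nat.card {Y : Finset (Fin n) // 0 ≤ ∑ i ∈ Y, a i} := by
  classical
  rw [Nat.card_eq_fintype_card, Fintype.card_subtype]
  set T := Finset.univ.filter (fun Y : Finset (Fin n) => 0 ≤ ∑ i ∈ Y, a i) with hT
  have hcover : (Finset.univ : Finset (Finset (Fin n))) ⊆ T ∪ T.image compl := by
    intro Y _
    by_cases hY : 0 ≤ ∑ i ∈ Y, a i
    · exact Finset.mem_union_left _ (by simp [hT, hY])
    · refine Finset.mem_union_right _ (Finset.mem_image.2 ⟨Yᶜ, ?_, by simp⟩)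
      simp only [hT, Finset.mem_filter, Finset.mem_univ, true_and]
      have hsum : ∑ i ∈ Y, a i + ∑ i ∈ Yᶜ, a i = ∑ i, a i :=
        Finset.sum_add_sum_compl Y a
      linarith
  have h1 : 2 ^ n ≤ 2 * T.card := by
    calc (2:ℕ) ^ n = (Finset.univ : Finset (Finset (Fin n))).card := by simp
    _ ≤ (T ∪ T.image compl).card := Finset.card_le_card hcover
    _ ≤ T.card + (T.image compl).card := by exact Finset.card_union_le _ _
    _ ≤ T.card + T.card := Nat.add_le_add_left (Finset.card_image_le (s := T) (f := compl)) _
    _ = 2 * T.card := by ring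
  have h2 : (2:ℕ) ^ n = 2 * 2 ^ (n - 1) := by
    conv_lhs => rw [← Nat.sub_add_cancel hn]
    ring
  omega
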